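/- arXiv:0908.0440 — 3 statements merged into one kernel-verified Lean document; each statement's English description precedes it below -/
import Mathlib

section
/- (Schwartz–Zippel) Let f be a nonzero polynomial of total degree at most d in n variables over a field K, and let X be a finite nonempty subset of K. If x₁, ..., x_n are chosen independently and uniformly at random from X, then the probability that f(x₁, ..., x_n) = 0 is at most d / |X|. -/
open scoped Classical

open Finset MvPolynomial in
private lemma sz_nat {K : Type*} [Field K] :
    ∀ n : ℕ, ∀ f : MvPolynomial (Fin n) K, f ≠ 0 → ∀ X : Finset K,
    ((Fintype.piFinset fun _ : Fin n => X).filter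
        (fun x => MvPolynomial.eval x f = 0)).card * X.card
      ≤ f.totalDegree * X.card ^ n := by
  intro n
  induction n with
  | zero =>
    intro f hf X
    obtain ⟨a, rfl⟩ := MvPolynomial.C_surjective (Fin 0) f
    have ha : a ≠ 0 := fun h => hf (by simp [h])
    have : (Fintype.piFinset fun _ : Fin 0 => X).filter
        (fun x => MvPolynomial.eval x (MvPolynomial.C a) = 0) = ∅ := by
      apply Finset.filter_eq_empty_iff.2
      intro x _
      simpa using ha
    rw [this]
    simp
  | succ n ih =>
    intro f hf X
    set F := MvPolynomial.finSuccEquiv K n f with hFdef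
    have hF : F ≠ 0 := fun h =>
      hf ((MvPolynomial.finSuccEquiv K n).injective (by rw [map_zero, ← hFdef]; exact h))
    set k := F.natDegree with hk
    set c := F.leadingCoeff with hcdef
    have hc : c ≠ 0 := Polynomial.leadingCoeff_ne_zero.mpr hF
    have htd : c.totalDegree + k ≤ f.totalDegree := by
      have := MvPolynomial.totalDegree_coeff_finSuccEquiv_add_le f k
        (by rw [Polynomial.coeff_natDegree]; exact hc)
      exact this
    set P := Fintype.piFinset fun _ : Fin n => X with hP
    set Z := (Fintype.piFinset fun _ : Fin (n + 1) => X).filter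
        (fun x => MvPolynomial.eval x f = 0) with hZ
    set Zc := P.filter (fun y => MvPolynomial.eval y c = 0) with hZc
    -- transfer to the product X ×ˢ P
    set T := (X ×ˢ P).filter
        (fun p : K × (Fin n → K) => MvPolynomial.eval (Fin.cons p.1 p.2) f = 0) with hT
    have hcard : Z.card = T.card := by
      refine Finset.card_bij' (fun x _ => (x 0, Fin.tail x)) (fun p _ => Fin.cons p.1 p.2)
        ?hi ?hj ?left ?right
      case hi =>
        intro x hx
        simp only [hZ, Finset.mem_filter, Fintype.mem_piFinset] at hx
        simp only [hT, hP, Finset.mem_filter, Finset.mem_product, Fintype.mem_piFinset]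
        refine ⟨⟨hx.1 0, fun i => hx.1 i.succ⟩, ?_⟩
        rw [Fin.cons_self_tail]
        exact hx.2
      case hj =>
        intro p hp
        simp only [hT, hP, Finset.mem_filter, Finset.mem_product, Fintype.mem_piFinset] at hp
        simp only [hZ, Finset.mem_filter, Fintype.mem_piFinset]
        refine ⟨fun i => ?_, hp.2⟩
        refine Fin.cases ?_ ?_ i
        · simpa using hp.1.1
        · intro j; simpa using hp.1.2 j
      case left =>
        intro x _
        exact Fin.cons_self_tail x
      case right =>
        intro p _
        simp
    -- the two parts
    set T1 := (X ×ˢ P).filter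
        (fun p : K × (Fin n → K) => MvPolynomial.eval p.2 c = 0) with hT1
    set T2 := (X ×ˢ P).filter
        (fun p : K × (Fin n → K) => MvPolynomial.eval p.2 c ≠ 0
          ∧ MvPolynomial.eval (Fin.cons p.1 p.2) f = 0) with hT2
    have hsub : T ⊆ T1 ∪ T2 := by
      intro p hp
      simp only [hT, Finset.mem_filter] at hp
      simp only [hT1, hT2, Finset.mem_union, Finset.mem_filter]
      by_cases h : MvPolynomial.eval p.2 c = 0
      · exact Or.inl ⟨hp.1, h⟩
      · exact Or.inr ⟨hp.1, h, hp.2⟩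
    have hT1card : T1.card = X.card * Zc.card := by
      have : T1 = X ×ˢ Zc := by
        ext p
        simp only [hT1, hZc, Finset.mem_filter, Finset.mem_product]
        tauto
      rw [this, Finset.card_product]
    have hT2card : T2.card ≤ k * X.card ^ n := by
      have hfib : ∀ p ∈ T2, p.2 ∈ P := by
        intro p hp
        simp only [hT2, Finset.mem_filter, Finset.mem_product] at hp
        exact hp.1.2
      rw [Finset.card_eq_sum_card_fiberwise hfib]
      have hbound : ∀ y ∈ P, (T2.filter fun p => p.2 = y).card ≤ k := by
        intro y _
        by_cases hy : MvPolynomial.eval y c = 0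
        · have : T2.filter (fun p => p.2 = y) = ∅ := by
            apply Finset.filter_eq_empty_iff.2
            intro p hp h2
            simp only [hT2, Finset.mem_filter] at hp
            exact hp.2.1 (h2 ▸ hy)
          simp [this]
        · set g := F.map (MvPolynomial.eval y) with hg
          have hgne : g ≠ 0 := by
            intro h
            apply hy
            have : g.coeff k = 0 := by rw [h]; simp
            rwa [hg, Polynomial.coeff_map, Polynomial.coeff_natDegree] at this
          have hgdeg : g.natDegree ≤ k := Polynomial.natDegree_map_le
          set R := X.filter (fun t => g.eval t = 0) with hR
          have hRcard : R.card ≤ k := by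
            have hsubR : R ⊆ g.roots.toFinset := by
              intro t ht
              simp only [hR, Finset.mem_filter] at ht
              rw [Multiset.mem_toFinset, Polynomial.mem_roots hgne]
              exact ht.2
            calc R.card ≤ g.roots.toFinset.card := Finset.card_le_card hsubR
              _ ≤ Multiset.card g.roots := Multiset.toFinset_card_le _
              _ ≤ g.natDegree := Polynomial.card_roots' g
              _ ≤ k := hgdeg
          refine le_trans (Finset.card_le_card_of_injOn (fun p => p.1) ?_ ?_) hRcard
          · intro p hp
            simp only [Finset.mem_coe, Finset.mem_filter, hT2, Finset.mem_product] at hp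
            obtain ⟨⟨⟨hp1, _⟩, _, hpf⟩, hpy⟩ := hp
            rw [Finset.mem_coe, hR, Finset.mem_filter]
            refine ⟨hp1, ?_⟩
            rw [hg, ← hpy, ← MvPolynomial.eval_eq_eval_mv_eval']
            exact hpf
          · intro p hp q hq hpq
            simp only [Finset.mem_coe, Finset.mem_filter] at hp hq
            exact Prod.ext hpq (hp.2.trans hq.2.symm)
      calc ∑ y ∈ P, (T2.filter fun p => p.2 = y).card
          ≤ ∑ _y ∈ P, k := Finset.sum_le_sum hbound
        _ = P.card * k := by rw [Finset.sum_const, smul_eq_mul]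
        _ = k * X.card ^ n := by
            rw [hP, Fintype.card_piFinset]; simp [mul_comm]
    have hZcard : Z.card ≤ X.card * Zc.card + k * X.card ^ n := by
      rw [hcard]
      calc T.card ≤ (T1 ∪ T2).card := Finset.card_le_card hsub
        _ ≤ T1.card + T2.card := Finset.card_union_le _ _
        _ ≤ X.card * Zc.card + k * X.card ^ n := by
            rw [hT1card]; exact Nat.add_le_add_left hT2card _
    have hih := ih c hc X
    calc Z.card * X.card ≤ (X.card * Zc.card + k * X.card ^ n) * X.card :=
          Nat.mul_le_mul_right _ hZcard
      _ = X.card * (Zc.card * X.card) + k * X.card ^ (n + 1) := by ring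
      _ ≤ X.card * (c.totalDegree * X.card ^ n) + k * X.card ^ (n + 1) := by
          exact Nat.add_le_add_right (Nat.mul_le_mul_left _ hih) _
      _ = (c.totalDegree + k) * X.card ^ (n + 1) := by ring
      _ ≤ f.totalDegree * X.card ^ (n + 1) := Nat.mul_le_mul_right _ htd

/-- Schwartz–Zippel lemma: for a nonzero `n`-variate polynomial `f` of total
degree at most `d` over a field `K` and a finite nonempty `X ⊆ K`, the
probability that `f` vanishes at a uniformly random point of `Xⁿ` is at most
`d / |X|`. -/
theorem schwartz_zippel {K : Type*} [Field K] {n d : ℕ}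
    (f : MvPolynomial (Fin n) K) (hf : f ≠ 0) (hdeg : f.totalDegree ≤ d)
    (X : Finset K) (hX : X.Nonempty) :
    (((Fintype.piFinset fun _ : Fin n => X).filter
        (fun x => MvPolynomial.eval x f = 0)).card : ℝ) / ((X.card : ℝ) ^ n)
      ≤ (d : ℝ) / (X.card : ℝ) := by
  have hXpos : 0 < (X.card : ℝ) := by exact_mod_cast Finset.card_pos.mpr hX
  have hpow : 0 < (X.card : ℝ) ^ n := pow_pos hXpos n
  rw [div_le_div_iff₀ hpow hXpos]
  have h := (sz_nat n f hf X).trans (Nat.mul_le_mul_right _ hdeg)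
  exact_mod_cast h
end

section
/- Let ρ be a positive semidefinite operator on a finite-dimensional complex Hilbert space H with spectral decomposition ρ = Σᵢ₌₁ⁿ pᵢ |eᵢ⟩⟨eᵢ| (pᵢ > 0, {eᵢ} orthonormal), and set ẽᵢ = √pᵢ eᵢ. Then vectors q̃₁, ..., q̃_t ∈ H (with t ≥ n) satisfy Σⱼ |q̃ⱼ⟩⟨q̃ⱼ| = ρ if and only if there exists a t × t unitary matrix U = [u_{ij}] such that q̃ⱼ = Σᵢ₌₁ⁿ u_{ij} ẽᵢ for all j (where ẽᵢ = 0 for i > n). -/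
private lemma sum_fin_le_aux {M : Type*} [AddCommMonoid M] {n t : ℕ} (hnt : n ≤ t)
    (f : Fin t → M) (g : Fin n → M)
    (hf : ∀ i : Fin t, ¬ (i : ℕ) < n → f i = 0)
    (hg : ∀ i : Fin n, f (Fin.castLE hnt i) = g i) :
    ∑ i, f i = ∑ i, g i := by
  classical
  set F : ℕ → M := fun i => if h : i < t then f ⟨i, h⟩ else 0 with hF
  have h1 : ∑ i : Fin t, f i = ∑ i ∈ Finset.range t, F i := by
    rw [← Fin.sum_univ_eq_sum_range]
    exact Finset.sum_congr rfl fun i _ => by simp [hF, i.2]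
  have h2 : ∑ i ∈ Finset.range t, F i = ∑ i ∈ Finset.range n, F i := by
    refine (Finset.sum_subset (Finset.range_subset_range.mpr hnt) ?_).symm
    intro x hx hxn
    simp only [Finset.mem_range] at hx hxn
    simp only [hF, dif_pos hx]
    exact hf ⟨x, hx⟩ hxn
  have h3 : ∑ i ∈ Finset.range n, F i = ∑ i : Fin n, g i := by
    rw [← Fin.sum_univ_eq_sum_range]
    refine Finset.sum_congr rfl fun i _ => ?_
    have hit : (i : ℕ) < t := lt_of_lt_of_le i.2 hnt
    simp only [hF, dif_pos hit]
    rw [← hg i]; rfl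
  rw [h1, h2, h3]

/-- (Hughston–Jozsa–Wootters) Let `ρ = Σᵢ pᵢ |eᵢ⟩⟨eᵢ|` with `pᵢ > 0` and
`{eᵢ}` orthonormal, and set `ẽᵢ = √pᵢ eᵢ` (extended by `0` for `i > n`).
Vectors `q̃₁, …, q̃_t` (with `t ≥ n`) satisfy `Σⱼ |q̃ⱼ⟩⟨q̃ⱼ| = ρ` iff there is a
`t × t` unitary `U` with `q̃ⱼ = Σᵢ u_{ij} ẽᵢ` for all `j`. -/
theorem ensemble_iff_unitary {H : Type*} [NormedAddCommGroup H]
    [InnerProductSpace ℂ H] [FiniteDimensional ℂ H] {n t : ℕ} (hnt : n ≤ t)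
    (p : Fin n → ℝ) (hp : ∀ i, 0 < p i) (e : Fin n → H) (he : Orthonormal ℂ e)
    (et : Fin t → H)
    (het : ∀ i : Fin t, et i =
      if h : (i : ℕ) < n then Real.sqrt (p ⟨i, h⟩) • e ⟨i, h⟩ else 0)
    (q : Fin t → H) :
    (∀ w : H, ∑ j, (inner ℂ (q j) w : ℂ) • q j
        = ∑ i, (p i : ℂ) • (inner ℂ (e i) w : ℂ) • e i) ↔
      ∃ U ∈ Matrix.unitaryGroup (Fin t) ℂ,
        ∀ j, q j = ∑ i, U i j • et i := by
  classical
  -- reduction of the spectral side to the `et` family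
  have hS : ∀ w : H, ∑ i : Fin t, (inner ℂ (et i) w : ℂ) • et i
      = ∑ i : Fin n, (p i : ℂ) • (inner ℂ (e i) w : ℂ) • e i := by
    intro w
    refine sum_fin_le_aux hnt _ _ ?_ ?_
    · intro i hi
      rw [het i, dif_neg hi]
      simp
    · intro i
      have hi : ((Fin.castLE hnt i : Fin t) : ℕ) < n := i.2
      rw [het, dif_pos hi]
      have hii : (⟨((Fin.castLE hnt i : Fin t) : ℕ), hi⟩ : Fin n) = i := by
        ext; rfl
      rw [hii, RCLike.real_smul_eq_coe_smul (K := ℂ)]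
      rw [inner_smul_left, smul_smul, smul_smul]
      congr 1
      rw [RCLike.conj_ofReal]
      rw [mul_right_comm, ← RCLike.ofReal_mul, Real.mul_self_sqrt (hp i).le]
      norm_cast
  constructor
  · intro hq
    -- each q j lies in the span of the e i
    have hqK : ∀ j, q j ∈ Submodule.span ℂ (Set.range e) := by
      intro j
      set K : Submodule ℂ H := Submodule.span ℂ (Set.range e) with hK
      rw [← Submodule.orthogonal_orthogonal K]
      rw [Submodule.mem_orthogonal]
      intro u hu
      have heu : ∀ i, (inner ℂ (e i) u : ℂ) = 0 := fun i =>
        (Submodule.mem_orthogonal K u).mp hu (e i) (Submodule.subset_span ⟨i, rfl⟩)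
      have hsum : ∑ j', (inner ℂ (q j') u : ℂ) • q j' = 0 := by
        rw [hq u]
        exact Finset.sum_eq_zero fun i _ => by rw [heu i]; simp
      have h2 : ∑ j', ((Complex.normSq (inner ℂ u (q j') : ℂ) : ℂ)) = 0 := by
        have h1 := congrArg (fun x => (inner ℂ u x : ℂ)) hsum
        simp only [inner_sum, inner_smul_right, inner_zero_right] at h1
        rw [← h1]
        refine Finset.sum_congr rfl fun j' _ => ?_
        rw [Complex.normSq_eq_conj_mul_self, inner_conj_symm]
      have h4 : ∑ j', Complex.normSq (inner ℂ u (q j')) = 0 := by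
        exact_mod_cast h2
      have h5 := (Finset.sum_eq_zero_iff_of_nonneg
        (fun j' _ => Complex.normSq_nonneg (inner ℂ u (q j')))).mp h4 j (Finset.mem_univ _)
      exact Complex.normSq_eq_zero.mp h5
    set A : Fin n → Fin t → ℂ := fun i j => (inner ℂ (e i) (q j) : ℂ) with hA
    have hrep : ∀ j, q j = ∑ i, A i j • e i := by
      intro j
      obtain ⟨c, hc⟩ := (Submodule.mem_span_range_iff_exists_fun ℂ).mp (hqK j)
      have hci : ∀ i, A i j = c i := by
        intro i
        rw [hA]
        simp only
        rw [← hc]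
        exact he.inner_right_fintype c i
      calc q j = ∑ i, c i • e i := hc.symm
        _ = ∑ i, A i j • e i := Finset.sum_congr rfl fun i _ => by rw [hci i]
    have horth := orthonormal_iff_ite.mp he
    have hGram : ∀ k l : Fin n, ∑ j, (starRingEnd ℂ) (A k j) * A l j
        = if k = l then (p k : ℂ) else 0 := by
      intro k l
      have h1 := congrArg (fun x => (inner ℂ (e l) x : ℂ)) (hq (e k))
      simp only [inner_sum, inner_smul_right] at h1
      have h2 : ∑ j, (inner ℂ (q j) (e k) : ℂ) * (inner ℂ (e l) (q j) : ℂ)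
          = ∑ j, (starRingEnd ℂ) (A k j) * A l j := by
        refine Finset.sum_congr rfl fun j _ => ?_
        rw [← inner_conj_symm (q j) (e k)]
      rw [h2] at h1
      rw [h1]
      simp only [horth]
      by_cases hkl : k = l
      · subst hkl
        simp
      · rw [if_neg hkl]
        refine Finset.sum_eq_zero fun x _ => ?_
        by_cases hx : x = k
        · simp [hx, (Ne.symm hkl : l ≠ k)]
        · simp [hx]
    set r : Fin n → EuclideanSpace ℂ (Fin t) :=
      fun k => WithLp.toLp 2 (fun j => ((Real.sqrt (p k) : ℂ))⁻¹ * A k j) with hr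
    have hsne : ∀ k, ((Real.sqrt (p k) : ℂ)) ≠ 0 := fun k => by
      simp [Real.sqrt_ne_zero' , hp k]
    have hron : Orthonormal ℂ r := by
      rw [orthonormal_iff_ite]
      intro k l
      have hterm : ∀ j, (starRingEnd ℂ) (r k j) * r l j
          = ((Real.sqrt (p k) : ℂ))⁻¹ * (((Real.sqrt (p l) : ℂ))⁻¹
              * ((starRingEnd ℂ) (A k j) * A l j)) := by
        intro j
        simp only [hr, PiLp.toLp_apply]
        rw [map_mul, map_inv₀, Complex.conj_ofReal]
        ring
      rw [PiLp.inner_apply]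
      simp only [RCLike.inner_apply]
      rw [Finset.sum_congr rfl fun j _ => (mul_comm _ _).trans (hterm j), ← Finset.mul_sum, ← Finset.mul_sum,
        hGram k l]
      split_ifs with h
      · subst h
        rw [← mul_assoc, ← mul_inv, ← Complex.ofReal_mul, Real.mul_self_sqrt (hp k).le]
        rw [inv_mul_cancel₀ (by exact_mod_cast (hp k).ne')]
      · simp
    set v : Fin t → EuclideanSpace ℂ (Fin t) :=
      fun i => if h : (i : ℕ) < n then r ⟨i, h⟩ else 0 with hv
    have hvon : Orthonormal ℂ (({i : Fin t | (i : ℕ) < n}).restrict v) := by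
      rw [orthonormal_iff_ite]
      rintro ⟨i, hi⟩ ⟨i', hi'⟩
      have hi2 : (i : ℕ) < n := hi
      have hi2' : (i' : ℕ) < n := hi'
      have hval := orthonormal_iff_ite.mp hron ⟨(i : ℕ), hi2⟩ ⟨(i' : ℕ), hi2'⟩
      show inner ℂ (v i) (v i') = _
      simp only [hv, dif_pos hi2, dif_pos hi2']
      rw [hval]
      simp [Fin.ext_iff, Subtype.ext_iff]
    obtain ⟨b, hb⟩ := Orthonormal.exists_orthonormalBasis_extension_of_card_eq
      (by simp [finrank_euclideanSpace]) hvon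
    refine ⟨Matrix.of (fun i j => b i j), ?_, ?_⟩
    · rw [Matrix.mem_unitaryGroup_iff]
      ext i k
      rw [Matrix.mul_apply, Matrix.one_apply]
      have hbo := orthonormal_iff_ite.mp b.orthonormal k i
      rw [PiLp.inner_apply] at hbo
      simp only [RCLike.inner_apply] at hbo
      simp only [Matrix.star_apply, Matrix.of_apply]
      rw [show (∑ x, b i x * star (b k x))
          = ∑ x, b i x * (starRingEnd ℂ) (b k x) from rfl, hbo]
      simp [eq_comm]
    · intro j
      rw [hrep j]
      refine (sum_fin_le_aux hnt _ _ ?_ ?_).symm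
      · intro i hi
        rw [het i, dif_neg hi, smul_zero]
      · intro i
        have hi : ((Fin.castLE hnt i : Fin t) : ℕ) < n := i.2
        rw [het, dif_pos hi]
        have hmem : (Fin.castLE hnt i) ∈ {i : Fin t | (i : ℕ) < n} := hi
        have hbv : b (Fin.castLE hnt i) = v (Fin.castLE hnt i) := hb _ hmem
        have hii : (⟨((Fin.castLE hnt i : Fin t) : ℕ), hi⟩ : Fin n) = i := by
          ext; rfl
        rw [hii]
        show b (Fin.castLE hnt i) j • (Real.sqrt (p i) • e i) = A i j • e i
        rw [hbv]
        simp only [hv, dif_pos hi, hii, hr, PiLp.toLp_apply]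
        rw [← Complex.coe_smul, smul_smul]
        congr 1
        rw [mul_comm, ← mul_assoc, mul_inv_cancel₀ (hsne i), one_mul]
  · rintro ⟨U, hU, hqU⟩ w
    rw [← hS w]
    have hUU : U * star U = 1 := Matrix.mem_unitaryGroup_iff.mp hU
    have hd : ∀ i i' : Fin t, ∑ j, (starRingEnd ℂ) (U i j) * U i' j
        = if i' = i then 1 else 0 := by
      intro i i'
      have h1 := congrFun (congrFun hUU i') i
      rw [Matrix.mul_apply] at h1
      simp only [Matrix.star_apply, Matrix.one_apply] at h1
      rw [← h1]
      exact Finset.sum_congr rfl fun j _ => by rw [mul_comm]; rfl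
    calc ∑ j, (inner ℂ (q j) w : ℂ) • q j
        = ∑ j, ∑ i, ∑ i', ((starRingEnd ℂ) (U i j) * (inner ℂ (et i) w : ℂ) * U i' j) • et i' := by
          refine Finset.sum_congr rfl fun j _ => ?_
          rw [hqU j, sum_inner, Finset.sum_smul]
          refine Finset.sum_congr rfl fun i _ => ?_
          rw [inner_smul_left, Finset.smul_sum]
          exact Finset.sum_congr rfl fun i' _ => by rw [smul_smul]
      _ = ∑ i, ∑ i', (∑ j, (starRingEnd ℂ) (U i j) * U i' j) • ((inner ℂ (et i) w : ℂ) • et i') := by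
          rw [Finset.sum_comm]
          refine Finset.sum_congr rfl fun i _ => ?_
          rw [Finset.sum_comm]
          refine Finset.sum_congr rfl fun i' _ => ?_
          rw [Finset.sum_smul]
          refine Finset.sum_congr rfl fun j _ => ?_
          rw [smul_smul]
          congr 1
          ring
      _ = ∑ i, (inner ℂ (et i) w : ℂ) • et i := by
          refine Finset.sum_congr rfl fun i _ => ?_
          simp [hd]
end

section
/- Let ψ ∈ H_A ⊗ H_B ⊗ H_C be a unit vector with Schmidt decomposition ψ = Σᵢ₌₁ⁿ ẽᵢ ⊗ fᵢ where ẽᵢ ∈ H_A ⊗ H_B are orthogonal and {fᵢ} ⊂ H_C is orthonormal. Suppose there exist linear maps A : H_A → H_A, B : H_B → H_B, C : H_C → H_C and a unit vector φ ∈ H_A ⊗ H_B, c₀ ∈ H_C such that (A ⊗ B ⊗ C)ψ = φ ⊗ c₀. Then there exists φ' in span{ẽ₁, ..., ẽ_n} with (A ⊗ B)φ' = φ; in particular, the Schmidt rank of φ (as an element of H_A ⊗ H_B) is at most the maximal Schmidt rank over span{ẽ₁, ..., ẽ_n}. -/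
open scoped TensorProduct

/-- The Schmidt rank of a bipartite vector: the minimal number of simple
tensors needed to express it. -/
noncomputable def schmidtRank {HA HB : Type*} [AddCommGroup HA] [Module ℂ HA]
    [AddCommGroup HB] [Module ℂ HB] (v : HA ⊗[ℂ] HB) : ℕ :=
  sInf {k : ℕ | ∃ (a : Fin k → HA) (b : Fin k → HB), v = ∑ i, a i ⊗ₜ[ℂ] b i}

lemma exists_rep {M N : Type*} [AddCommGroup M] [Module ℂ M] [AddCommGroup N] [Module ℂ N]
    (v : M ⊗[ℂ] N) : ∃ (k : ℕ) (a : Fin k → M) (b : Fin k → N), v = ∑ i, a i ⊗ₜ[ℂ] b i := by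
  induction v using TensorProduct.induction_on with
  | zero => exact ⟨0, ![], ![], by simp⟩
  | tmul x y => exact ⟨1, ![x], ![y], by simp⟩
  | add x y hx hy =>
    obtain ⟨k, a, b, rfl⟩ := hx
    obtain ⟨l, c, d, rfl⟩ := hy
    exact ⟨k + l, Fin.append a c, Fin.append b d, by
      rw [Fin.sum_univ_add]; simp [Fin.append_left, Fin.append_right]⟩

lemma schmidtRank_map_le {HA HB : Type*} [AddCommGroup HA] [Module ℂ HA]
    [AddCommGroup HB] [Module ℂ HB] (A : HA →ₗ[ℂ] HA) (B : HB →ₗ[ℂ] HB)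
    (v : HA ⊗[ℂ] HB) : schmidtRank (TensorProduct.map A B v) ≤ schmidtRank v := by
  have hne : {k : ℕ | ∃ (a : Fin k → HA) (b : Fin k → HB), v = ∑ i, a i ⊗ₜ[ℂ] b i}.Nonempty := by
    obtain ⟨k, a, b, h⟩ := exists_rep v
    exact ⟨k, a, b, h⟩
  obtain ⟨a, b, hv⟩ := Nat.sInf_mem hne
  refine Nat.sInf_le ⟨fun i => A (a i), fun i => B (b i), ?_⟩
  conv_lhs => rw [hv]
  rw [map_sum]
  simp only [TensorProduct.map_tmul]
  rfl

/-- If `(A ⊗ B ⊗ C) ψ = φ ⊗ c₀` with `ψ = Σᵢ ẽᵢ ⊗ fᵢ` a Schmidt decomposition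
(`{fᵢ}` orthonormal) and `c₀ ≠ 0`, then some `φ'` in the span of the `ẽᵢ`
satisfies `(A ⊗ B) φ' = φ`; in particular the Schmidt rank of `φ` is at most
the maximal Schmidt rank over that span. -/
theorem tripartite_to_bipartite_pullback
    {HA HB HC : Type*}
    [NormedAddCommGroup HA] [InnerProductSpace ℂ HA] [FiniteDimensional ℂ HA]
    [NormedAddCommGroup HB] [InnerProductSpace ℂ HB] [FiniteDimensional ℂ HB]
    [NormedAddCommGroup HC] [InnerProductSpace ℂ HC] [FiniteDimensional ℂ HC]
    {n : ℕ} (et : Fin n → HA ⊗[ℂ] HB) (hind : LinearIndependent ℂ et)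
    (f : Fin n → HC) (hf : Orthonormal ℂ f)
    (ψ : (HA ⊗[ℂ] HB) ⊗[ℂ] HC) (hψ : ψ = ∑ i, et i ⊗ₜ[ℂ] f i)
    (A : HA →ₗ[ℂ] HA) (B : HB →ₗ[ℂ] HB) (C : HC →ₗ[ℂ] HC)
    (φ : HA ⊗[ℂ] HB) (c₀ : HC) (hc₀ : c₀ ≠ 0)
    (hconv : TensorProduct.map (TensorProduct.map A B) C ψ = φ ⊗ₜ[ℂ] c₀) :
    (∃ φ' ∈ Submodule.span ℂ (Set.range et), TensorProduct.map A B φ' = φ) ∧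
      ∃ φ' ∈ Submodule.span ℂ (Set.range et),
        schmidtRank φ ≤ schmidtRank φ' := by
  have hnorm : ((‖c₀‖ : ℂ)^2) ≠ 0 := by
    exact pow_ne_zero 2 (by exact_mod_cast norm_ne_zero_iff.mpr hc₀)
  set g : HC →ₗ[ℂ] ℂ := ((‖c₀‖ : ℂ)^2)⁻¹ •
      ((InnerProductSpace.toDual ℂ HC c₀ : HC →L[ℂ] ℂ) : HC →ₗ[ℂ] ℂ) with hg
  have hgc : g c₀ = 1 := by
    simp only [hg, LinearMap.smul_apply, ContinuousLinearMap.coe_coe,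
      InnerProductSpace.toDual_apply_apply, inner_self_eq_norm_sq_to_K, smul_eq_mul]
    exact inv_mul_cancel₀ hnorm
  set F : ((HA ⊗[ℂ] HB) ⊗[ℂ] HC) →ₗ[ℂ] (HA ⊗[ℂ] HB) :=
    (TensorProduct.rid ℂ (HA ⊗[ℂ] HB)).toLinearMap ∘ₗ
      TensorProduct.map LinearMap.id g with hFdef
  have hF : ∀ (x : HA ⊗[ℂ] HB) (y : HC), F (x ⊗ₜ[ℂ] y) = g y • x := by
    intro x y
    simp [hFdef, TensorProduct.rid_tmul]
  set φ' : HA ⊗[ℂ] HB := ∑ i, g (C (f i)) • et i with hφ'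
  have hmem : φ' ∈ Submodule.span ℂ (Set.range et) :=
    Submodule.sum_mem _ fun i _ => Submodule.smul_mem _ _ (Submodule.subset_span ⟨i, rfl⟩)
  have key : TensorProduct.map A B φ' = φ := by
    have h1 : F (TensorProduct.map (TensorProduct.map A B) C ψ) = F (φ ⊗ₜ[ℂ] c₀) := by
      rw [hconv]
    rw [hψ, map_sum, map_sum] at h1
    simp only [TensorProduct.map_tmul, hF, hgc, one_smul] at h1
    rw [hφ', map_sum]
    simpa [TensorProduct.map_tmul] using h1
  exact ⟨⟨φ', hmem, key⟩, φ', hmem, key ▸ schmidtRank_map_le A B φ'⟩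
end
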